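/- Let g be a Lie triple system over a field F with char F ≠ 2, 3 and N : g → g a Nijenhuis operator. Then for every integer k > 0 the power N^k is also a Nijenhuis operator, i.e. [N^k x, N^k y, N^k z] = 0 and (N^k)²[x,y,z] = N^k[N^k x,y,z] + N^k[x,N^k y,z] + N^k[x,y,N^k z] − [N^k x,N^k y,z] − [N^k x,y,N^k z] − [x,N^k y,N^k z] for all x,y,z ∈ g. -/
import Mathlib

/-- `N` is a Nijenhuis operator for the Lie triple system bracket `t`. -/
def IsNijenhuis {F : Type*} [Field F] {g : Type*} [AddCommGroup g] [Module F g]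
    (t : g →ₗ[F] g →ₗ[F] g →ₗ[F] g) (N : Module.End F g) : Prop :=
  (∀ x y z : g, t (N x) (N y) (N z) = 0) ∧
  (∀ x y z : g,
    N (N (t x y z)) =
      N (t (N x) y z) + N (t x (N y) z) + N (t x y (N z)) -
        t (N x) (N y) z - t (N x) y (N z) - t x (N y) (N z))

section NijAux

variable {F : Type*} [Field F] {g : Type*} [AddCommGroup g] [Module F g]
variable (t : g →ₗ[F] g →ₗ[F] g →ₗ[F] g) (N : Module.End F g)

private lemma npow_apply (i j : ℕ) (v : g) : (N ^ (i + j)) v = (N ^ i) ((N ^ j) v) := by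
  rw [pow_add]; rfl

private lemma npow_succ_apply (m : ℕ) (v : g) : N ((N ^ m) v) = (N ^ (m + 1)) v := by
  rw [pow_succ']; rfl

/-- triple where two designated slots carry positive powers -/
private def FF (x y z : g) (i j : ℕ) : g :=
  t ((N ^ i) x) ((N ^ j) y) z + t ((N ^ i) x) y ((N ^ j) z) + t x ((N ^ i) y) ((N ^ j) z)

private def VV (x y z : g) (m : ℕ) : g :=
  t ((N ^ m) x) y z + t x ((N ^ m) y) z + t x y ((N ^ m) z)

variable {t N}

private lemma van3 (h1 : ∀ x y z : g, t (N x) (N y) (N z) = 0)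
    {i j l : ℕ} (hi : 1 ≤ i) (hj : 1 ≤ j) (hl : 1 ≤ l) (u v w : g) :
    t ((N ^ i) u) ((N ^ j) v) ((N ^ l) w) = 0 := by
  obtain ⟨i, rfl⟩ : ∃ i', i = i' + 1 := ⟨i - 1, by omega⟩
  obtain ⟨j, rfl⟩ : ∃ j', j = j' + 1 := ⟨j - 1, by omega⟩
  obtain ⟨l, rfl⟩ : ∃ l', l = l' + 1 := ⟨l - 1, by omega⟩
  rw [← npow_succ_apply, ← npow_succ_apply, ← npow_succ_apply]
  exact h1 _ _ _

private lemma vanA (h1 : ∀ x y z : g, t (N x) (N y) (N z) = 0)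
    {j l : ℕ} (hj : 1 ≤ j) (hl : 1 ≤ l) (u v w : g) :
    t (N u) ((N ^ j) v) ((N ^ l) w) = 0 := by
  have := van3 h1 (le_refl 1) hj hl u v w
  rwa [pow_one] at this

private lemma vanB (h1 : ∀ x y z : g, t (N x) (N y) (N z) = 0)
    {i l : ℕ} (hi : 1 ≤ i) (hl : 1 ≤ l) (u v w : g) :
    t ((N ^ i) u) (N v) ((N ^ l) w) = 0 := by
  have := van3 h1 hi (le_refl 1) hl u v w
  rwa [pow_one] at this

private lemma vanC (h1 : ∀ x y z : g, t (N x) (N y) (N z) = 0)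
    {i j : ℕ} (hi : 1 ≤ i) (hj : 1 ≤ j) (u v w : g) :
    t ((N ^ i) u) ((N ^ j) v) (N w) = 0 := by
  have := van3 h1 hi hj (le_refl 1) u v w
  rwa [pow_one] at this

end NijAux

section NijAux2

variable {F : Type*} [Field F] {g : Type*} [AddCommGroup g] [Module F g]
variable {t : g →ₗ[F] g →ₗ[F] g →ₗ[F] g} {N : Module.End F g}

private lemma vanBC (h1 : ∀ x y z : g, t (N x) (N y) (N z) = 0)
    {i : ℕ} (hi : 1 ≤ i) (u v w : g) : t ((N ^ i) u) (N v) (N w) = 0 := by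
  have := van3 h1 hi (le_refl 1) (le_refl 1) u v w
  simpa using this

private lemma vanAC (h1 : ∀ x y z : g, t (N x) (N y) (N z) = 0)
    {j : ℕ} (hj : 1 ≤ j) (u v w : g) : t (N u) ((N ^ j) v) (N w) = 0 := by
  have := van3 h1 (le_refl 1) hj (le_refl 1) u v w
  simpa using this

private lemma vanAB (h1 : ∀ x y z : g, t (N x) (N y) (N z) = 0)
    {l : ℕ} (hl : 1 ≤ l) (u v w : g) : t (N u) (N v) ((N ^ l) w) = 0 := by
  have := van3 h1 (le_refl 1) (le_refl 1) hl u v w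
  simpa using this

private lemma hFexp (hN : IsNijenhuis t N) (x y z : g) (i j : ℕ) :
    N (N (FF t N x y z (i + 1) (j + 1))) =
      N (FF t N x y z (i + 2) (j + 1) + FF t N x y z (i + 1) (j + 2)) -
        FF t N x y z (i + 2) (j + 2) := by
  have h1 := hN.1
  have e := hN.2 ((N ^ (i + 1)) x) ((N ^ (j + 1)) y) z
  have f := hN.2 ((N ^ (i + 1)) x) y ((N ^ (j + 1)) z)
  have h := hN.2 x ((N ^ (i + 1)) y) ((N ^ (j + 1)) z)
  simp only [npow_succ_apply] at e f h
  rw [vanC h1 (by omega) (by omega), vanC h1 (by omega) (by omega),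
    vanC h1 (by omega) (by omega), map_zero] at e
  rw [vanB h1 (by omega) (by omega), vanB h1 (by omega) (by omega),
    vanB h1 (by omega) (by omega), map_zero] at f
  rw [vanA h1 (by omega) (by omega), vanA h1 (by omega) (by omega),
    vanA h1 (by omega) (by omega), map_zero] at h
  simp only [FF, map_add]
  rw [e, f, h]
  simp only [show ∀ m : ℕ, m + 1 + 1 = m + 2 from fun _ => rfl]
  abel

private lemma hVexp (hN : IsNijenhuis t N) (x y z : g) (m : ℕ) :
    N (N (VV t N x y z (m + 1))) =
      N (VV t N x y z (m + 2) + FF t N x y z (m + 1) 1 + FF t N x y z 1 (m + 1)) -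
        FF t N x y z (m + 2) 1 - FF t N x y z 1 (m + 2) := by
  have h1 := hN.1
  have e := hN.2 ((N ^ (m + 1)) x) y z
  have f := hN.2 x ((N ^ (m + 1)) y) z
  have h := hN.2 x y ((N ^ (m + 1)) z)
  simp only [npow_succ_apply] at e f h
  rw [vanBC h1 (by omega)] at e
  rw [vanAC h1 (by omega)] at f
  rw [vanAB h1 (by omega)] at h
  simp only [VV, FF, map_add, pow_one]
  rw [e, f, h]
  simp only [show ∀ m : ℕ, m + 1 + 1 = m + 2 from fun _ => rfl]
  abel

end NijAux2

section SumLemmas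

variable {M : Type*} [AddCommGroup M]

private lemma stepA (f : ℕ → ℕ → M) (n : ℕ) :
    ∑ a ∈ Finset.range n, (f (a + 2) (n - a) + f (a + 1) (n + 1 - a)) =
      (∑ a ∈ Finset.range (n + 1), f (a + 1) (n + 1 - a)) +
        (∑ a ∈ Finset.range (n + 1), f (a + 1) (n + 1 - a)) - f 1 (n + 1) - f (n + 1) 1 := by
  have h1 : ∑ a ∈ Finset.range (n + 1), f (a + 1) (n + 1 - a)
      = (∑ a ∈ Finset.range n, f (a + 2) (n - a)) + f 1 (n + 1) := by
    rw [Finset.sum_range_succ']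
    congr 1
    exact Finset.sum_congr rfl fun a ha => by
      have : n + 1 - (a + 1) = n - a := by omega
      rw [this]
  have h2 : ∑ a ∈ Finset.range (n + 1), f (a + 1) (n + 1 - a)
      = (∑ a ∈ Finset.range n, f (a + 1) (n + 1 - a)) + f (n + 1) 1 := by
    rw [Finset.sum_range_succ]
    have : n + 1 - n = 1 := by omega
    rw [this]
  rw [Finset.sum_add_distrib]
  nth_rewrite 1 [h1]
  rw [h2]
  abel

private lemma stepB (f : ℕ → ℕ → M) (n : ℕ) :
    ∑ a ∈ Finset.range n, f (a + 2) (n + 1 - a) =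
      (∑ a ∈ Finset.range (n + 2), f (a + 1) (n + 2 - a)) - f 1 (n + 2) - f (n + 2) 1 := by
  have h1 : ∑ a ∈ Finset.range (n + 2), f (a + 1) (n + 2 - a)
      = (∑ a ∈ Finset.range (n + 1), f (a + 2) (n + 1 - a)) + f 1 (n + 2) := by
    rw [Finset.sum_range_succ']
    congr 1
    exact Finset.sum_congr rfl fun a ha => by
      have : n + 2 - (a + 1) = n + 1 - a := by omega
      rw [this]
  have h2 : ∑ a ∈ Finset.range (n + 1), f (a + 2) (n + 1 - a)
      = (∑ a ∈ Finset.range n, f (a + 2) (n + 1 - a)) + f (n + 2) 1 := by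
    rw [Finset.sum_range_succ]
    have : n + 1 - n = 1 := by omega
    rw [this]
  rw [h1, h2]
  abel

private lemma sumE1 (f : ℕ → ℕ → M) (n : ℕ) :
    ∑ a ∈ Finset.range (2 * n + 2), f (a + 1) (2 * n + 2 - a) =
      (∑ a ∈ Finset.range n, f (a + 1) (2 * n + 2 - a)) + f (n + 1) (n + 2) + f (n + 2) (n + 1)
        + ∑ a ∈ Finset.range n, f (a + n + 3) (n - a) := by
  have h : ∑ a ∈ Finset.range (n + (n + 2)), f (a + 1) (2 * n + 2 - a)
      = (∑ a ∈ Finset.range n, f (a + 1) (2 * n + 2 - a)) +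
          ∑ a ∈ Finset.range (n + 2), f (n + a + 1) (2 * n + 2 - (n + a)) :=
    Finset.sum_range_add _ n (n + 2)
  have er : Finset.range (2 * n + 2) = Finset.range (n + (n + 2)) := by congr 1; omega
  rw [er, h]
  rw [Finset.sum_range_succ', Finset.sum_range_succ']
  have c1 : ∑ a ∈ Finset.range n, f (n + (a + 1 + 1) + 1) (2 * n + 2 - (n + (a + 1 + 1)))
      = ∑ a ∈ Finset.range n, f (a + n + 3) (n - a) := by
    refine Finset.sum_congr rfl fun a ha => ?_
    simp only [Finset.mem_range] at ha
    have e1 : n + (a + 1 + 1) + 1 = a + n + 3 := by omega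
    have e2 : 2 * n + 2 - (n + (a + 1 + 1)) = n - a := by omega
    rw [e1, e2]
  have c2 : n + (0 + 1) + 1 = n + 2 := by omega
  have c3 : 2 * n + 2 - (n + (0 + 1)) = n + 1 := by omega
  have c4 : n + 0 + 1 = n + 1 := by omega
  have c5 : 2 * n + 2 - (n + 0) = n + 2 := by omega
  rw [c1, c2, c3, c4, c5]
  abel

private lemma sumE2 (f : ℕ → ℕ → M) (n : ℕ) :
    ∑ a ∈ Finset.range (2 * n + 3), f (a + 1) (2 * n + 3 - a) =
      (∑ a ∈ Finset.range (n + 1), f (a + 1) (2 * n + 3 - a)) + f (n + 2) (n + 2)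
        + ∑ a ∈ Finset.range (n + 1), f (a + n + 3) (n + 1 - a) := by
  have h : ∑ a ∈ Finset.range ((n + 1) + (n + 2)), f (a + 1) (2 * n + 3 - a)
      = (∑ a ∈ Finset.range (n + 1), f (a + 1) (2 * n + 3 - a)) +
          ∑ a ∈ Finset.range (n + 2), f ((n + 1) + a + 1) (2 * n + 3 - ((n + 1) + a)) :=
    Finset.sum_range_add _ (n + 1) (n + 2)
  have er : Finset.range (2 * n + 3) = Finset.range ((n + 1) + (n + 2)) := by congr 1; omega
  rw [er, h]
  rw [Finset.sum_range_succ' (fun a => f (n + 1 + a + 1) (2 * n + 3 - (n + 1 + a))) (n + 1)]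
  have c1 : ∑ a ∈ Finset.range (n + 1), f (n + 1 + (a + 1) + 1) (2 * n + 3 - (n + 1 + (a + 1)))
      = ∑ a ∈ Finset.range (n + 1), f (a + n + 3) (n + 1 - a) := by
    refine Finset.sum_congr rfl fun a ha => ?_
    simp only [Finset.mem_range] at ha
    have e1 : n + 1 + (a + 1) + 1 = a + n + 3 := by omega
    have e2 : 2 * n + 3 - (n + 1 + (a + 1)) = n + 1 - a := by omega
    rw [e1, e2]
  have c2 : n + 1 + 0 + 1 = n + 2 := by omega
  have c3 : 2 * n + 3 - (n + 1 + 0) = n + 2 := by omega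
  rw [c1, c2, c3]
  abel

end SumLemmas

section KeyLemma

variable {F : Type*} [Field F] {g : Type*} [AddCommGroup g] [Module F g]
variable {t : g →ₗ[F] g →ₗ[F] g →ₗ[F] g} {N : Module.End F g}

private lemma key (hN : IsNijenhuis t N) (n : ℕ) (x y z : g) :
    (N ^ (n + 2)) (t x y z) =
      N ((∑ a ∈ Finset.range n, FF t N x y z (a + 1) (n - a)) + VV t N x y z (n + 1)) -
        ∑ a ∈ Finset.range (n + 1), FF t N x y z (a + 1) (n + 1 - a) := by
  induction n with
  | zero =>
      have h2 : (N ^ 2) (t x y z) = N (N (t x y z)) := by rw [pow_two]; rfl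
      simp only [Finset.range_zero, Finset.sum_empty, zero_add, Finset.sum_range_one,
        FF, VV, pow_one, Nat.zero_add, Nat.sub_zero]
      rw [h2, hN.2]
      simp only [map_add]
      abel
  | succ n ih =>
      simp only [show n + 1 + 1 = n + 2 from rfl, show n + 1 + 2 = n + 3 from rfl,
        show n + 1 + 1 - 0 = n + 2 from rfl]
      have hstep : (N ^ (n + 3)) (t x y z) = N ((N ^ (n + 2)) (t x y z)) := by
        rw [show n + 3 = 1 + (n + 2) from by omega, npow_apply, pow_one]
      rw [hstep, ih, map_sub, map_add, map_add,
        map_sum N (fun a => FF t N x y z (a + 1) (n - a)) (Finset.range n),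
        map_sum N (fun a => N (FF t N x y z (a + 1) (n - a))) (Finset.range n)]
      have hc : ∀ a ∈ Finset.range n, N (N (FF t N x y z (a + 1) (n - a)))
          = N (FF t N x y z (a + 2) (n - a) + FF t N x y z (a + 1) (n + 1 - a)) -
              FF t N x y z (a + 2) (n + 1 - a) := by
        intro a ha
        simp only [Finset.mem_range] at ha
        have e1 : n - a = (n - a - 1) + 1 := by omega
        rw [e1, hFexp hN x y z a (n - a - 1)]
        have e2 : n - a - 1 + 2 = n + 1 - a := by omega
        rw [e2, ← e1]
      rw [Finset.sum_congr rfl hc, Finset.sum_sub_distrib, ← map_sum,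
        stepA (FF t N x y z) n, stepB (FF t N x y z) n, hVexp hN x y z n]
      simp only [map_add, map_sub]
      abel

end KeyLemma

/- STATEMENT 9: any positive power of a Nijenhuis operator is a Nijenhuis operator. -/
theorem nijenhuis_pow {F : Type*} [Field F]
    (hchar2 : (2 : F) ≠ 0) (hchar3 : (3 : F) ≠ 0)
    {g : Type*} [AddCommGroup g] [Module F g]
    (t : g →ₗ[F] g →ₗ[F] g →ₗ[F] g)
    (hskew : ∀ x y : g, t x x y = 0)
    (hjac : ∀ x y z : g, t x y z + t y z x + t z x y = 0)
    (hfund : ∀ x y a b c : g,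
      t x y (t a b c) = t (t x y a) b c + t a (t x y b) c + t a b (t x y c))
    (N : Module.End F g) (hN : IsNijenhuis t N) :
    ∀ k : ℕ, 0 < k → IsNijenhuis t (N ^ k) := by
  intro k hk
  constructor
  · intro x y z
    obtain ⟨m, rfl⟩ : ∃ m, k = m + 1 := ⟨k - 1, by omega⟩
    exact van3 hN.1 (by omega) (by omega) (by omega) x y z
  · rcases k with _ | _ | n
    · exact absurd hk (by omega)
    · intro x y z
      simpa [pow_one] using hN.2 x y z
    · intro x y z
      simp only [show n + 1 + 1 = n + 2 from rfl]
      have hL0 : (N ^ (n + 2)) ((N ^ (n + 2)) (t x y z)) = (N ^ (2 * n + 2 + 2)) (t x y z) := by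
        rw [← npow_apply, show n + 2 + (n + 2) = 2 * n + 2 + 2 from by omega]
      have hX : (N ^ (n + 2)) (t ((N ^ (n + 2)) x) y z)
          = N ((∑ a ∈ Finset.range n,
                (t ((N ^ (a + n + 3)) x) ((N ^ (n - a)) y) z +
                  t ((N ^ (a + n + 3)) x) y ((N ^ (n - a)) z)))
              + (t ((N ^ (2 * n + 3)) x) y z + t ((N ^ (n + 2)) x) ((N ^ (n + 1)) y) z +
                  t ((N ^ (n + 2)) x) y ((N ^ (n + 1)) z)))
            - ∑ a ∈ Finset.range (n + 1),
                (t ((N ^ (a + n + 3)) x) ((N ^ (n + 1 - a)) y) z +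
                  t ((N ^ (a + n + 3)) x) y ((N ^ (n + 1 - a)) z)) := by
        rw [key hN n ((N ^ (n + 2)) x) y z]
        have s1 : ∑ a ∈ Finset.range n, FF t N ((N ^ (n + 2)) x) y z (a + 1) (n - a)
            = ∑ a ∈ Finset.range n,
                (t ((N ^ (a + n + 3)) x) ((N ^ (n - a)) y) z +
                  t ((N ^ (a + n + 3)) x) y ((N ^ (n - a)) z)) := by
          refine Finset.sum_congr rfl fun a ha => ?_
          simp only [Finset.mem_range] at ha
          simp only [FF]
          rw [← npow_apply N (a + 1) (n + 2) x, show a + 1 + (n + 2) = a + n + 3 from by omega,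
            van3 hN.1 (show 1 ≤ n + 2 by omega) (show 1 ≤ a + 1 by omega)
              (show 1 ≤ n - a by omega) x y z, add_zero]
        have s2 : ∑ a ∈ Finset.range (n + 1), FF t N ((N ^ (n + 2)) x) y z (a + 1) (n + 1 - a)
            = ∑ a ∈ Finset.range (n + 1),
                (t ((N ^ (a + n + 3)) x) ((N ^ (n + 1 - a)) y) z +
                  t ((N ^ (a + n + 3)) x) y ((N ^ (n + 1 - a)) z)) := by
          refine Finset.sum_congr rfl fun a ha => ?_
          simp only [Finset.mem_range] at ha
          simp only [FF]
          rw [← npow_apply N (a + 1) (n + 2) x, show a + 1 + (n + 2) = a + n + 3 from by omega,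
            van3 hN.1 (show 1 ≤ n + 2 by omega) (show 1 ≤ a + 1 by omega)
              (show 1 ≤ n + 1 - a by omega) x y z, add_zero]
        have s3 : VV t N ((N ^ (n + 2)) x) y z (n + 1)
            = t ((N ^ (2 * n + 3)) x) y z + t ((N ^ (n + 2)) x) ((N ^ (n + 1)) y) z +
                t ((N ^ (n + 2)) x) y ((N ^ (n + 1)) z) := by
          simp only [VV]
          rw [← npow_apply N (n + 1) (n + 2) x, show n + 1 + (n + 2) = 2 * n + 3 from by omega]
        rw [s1, s2, s3]
      have hY : (N ^ (n + 2)) (t x ((N ^ (n + 2)) y) z)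
          = N ((∑ a ∈ Finset.range n,
                (t ((N ^ (a + 1)) x) ((N ^ (2 * n + 2 - a)) y) z +
                  t x ((N ^ (a + n + 3)) y) ((N ^ (n - a)) z)))
              + (t ((N ^ (n + 1)) x) ((N ^ (n + 2)) y) z + t x ((N ^ (2 * n + 3)) y) z +
                  t x ((N ^ (n + 2)) y) ((N ^ (n + 1)) z)))
            - ∑ a ∈ Finset.range (n + 1),
                (t ((N ^ (a + 1)) x) ((N ^ (2 * n + 3 - a)) y) z +
                  t x ((N ^ (a + n + 3)) y) ((N ^ (n + 1 - a)) z)) := by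
        rw [key hN n x ((N ^ (n + 2)) y) z]
        have s1 : ∑ a ∈ Finset.range n, FF t N x ((N ^ (n + 2)) y) z (a + 1) (n - a)
            = ∑ a ∈ Finset.range n,
                (t ((N ^ (a + 1)) x) ((N ^ (2 * n + 2 - a)) y) z +
                  t x ((N ^ (a + n + 3)) y) ((N ^ (n - a)) z)) := by
          refine Finset.sum_congr rfl fun a ha => ?_
          simp only [Finset.mem_range] at ha
          simp only [FF]
          rw [← npow_apply N (n - a) (n + 2) y, show n - a + (n + 2) = 2 * n + 2 - a from by omega,
            ← npow_apply N (a + 1) (n + 2) y, show a + 1 + (n + 2) = a + n + 3 from by omega,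
            van3 hN.1 (show 1 ≤ a + 1 by omega) (show 1 ≤ n + 2 by omega)
              (show 1 ≤ n - a by omega) x y z]
          abel
        have s2 : ∑ a ∈ Finset.range (n + 1), FF t N x ((N ^ (n + 2)) y) z (a + 1) (n + 1 - a)
            = ∑ a ∈ Finset.range (n + 1),
                (t ((N ^ (a + 1)) x) ((N ^ (2 * n + 3 - a)) y) z +
                  t x ((N ^ (a + n + 3)) y) ((N ^ (n + 1 - a)) z)) := by
          refine Finset.sum_congr rfl fun a ha => ?_
          simp only [Finset.mem_range] at ha
          simp only [FF]
          rw [← npow_apply N (n + 1 - a) (n + 2) y,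
            show n + 1 - a + (n + 2) = 2 * n + 3 - a from by omega,
            ← npow_apply N (a + 1) (n + 2) y, show a + 1 + (n + 2) = a + n + 3 from by omega,
            van3 hN.1 (show 1 ≤ a + 1 by omega) (show 1 ≤ n + 2 by omega)
              (show 1 ≤ n + 1 - a by omega) x y z]
          abel
        have s3 : VV t N x ((N ^ (n + 2)) y) z (n + 1)
            = t ((N ^ (n + 1)) x) ((N ^ (n + 2)) y) z + t x ((N ^ (2 * n + 3)) y) z +
                t x ((N ^ (n + 2)) y) ((N ^ (n + 1)) z) := by
          simp only [VV]
          rw [← npow_apply N (n + 1) (n + 2) y, show n + 1 + (n + 2) = 2 * n + 3 from by omega]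
        rw [s1, s2, s3]
      have hZ : (N ^ (n + 2)) (t x y ((N ^ (n + 2)) z))
          = N ((∑ a ∈ Finset.range n,
                (t ((N ^ (a + 1)) x) y ((N ^ (2 * n + 2 - a)) z) +
                  t x ((N ^ (a + 1)) y) ((N ^ (2 * n + 2 - a)) z)))
              + (t ((N ^ (n + 1)) x) y ((N ^ (n + 2)) z) + t x ((N ^ (n + 1)) y) ((N ^ (n + 2)) z) +
                  t x y ((N ^ (2 * n + 3)) z)))
            - ∑ a ∈ Finset.range (n + 1),
                (t ((N ^ (a + 1)) x) y ((N ^ (2 * n + 3 - a)) z) +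
                  t x ((N ^ (a + 1)) y) ((N ^ (2 * n + 3 - a)) z)) := by
        rw [key hN n x y ((N ^ (n + 2)) z)]
        have s1 : ∑ a ∈ Finset.range n, FF t N x y ((N ^ (n + 2)) z) (a + 1) (n - a)
            = ∑ a ∈ Finset.range n,
                (t ((N ^ (a + 1)) x) y ((N ^ (2 * n + 2 - a)) z) +
                  t x ((N ^ (a + 1)) y) ((N ^ (2 * n + 2 - a)) z)) := by
          refine Finset.sum_congr rfl fun a ha => ?_
          simp only [Finset.mem_range] at ha
          simp only [FF]
          rw [← npow_apply N (n - a) (n + 2) z, show n - a + (n + 2) = 2 * n + 2 - a from by omega,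
            van3 hN.1 (show 1 ≤ a + 1 by omega) (show 1 ≤ n - a by omega)
              (show 1 ≤ n + 2 by omega) x y z, zero_add]
        have s2 : ∑ a ∈ Finset.range (n + 1), FF t N x y ((N ^ (n + 2)) z) (a + 1) (n + 1 - a)
            = ∑ a ∈ Finset.range (n + 1),
                (t ((N ^ (a + 1)) x) y ((N ^ (2 * n + 3 - a)) z) +
                  t x ((N ^ (a + 1)) y) ((N ^ (2 * n + 3 - a)) z)) := by
          refine Finset.sum_congr rfl fun a ha => ?_
          simp only [Finset.mem_range] at ha
          simp only [FF]
          rw [← npow_apply N (n + 1 - a) (n + 2) z,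
            show n + 1 - a + (n + 2) = 2 * n + 3 - a from by omega,
            van3 hN.1 (show 1 ≤ a + 1 by omega) (show 1 ≤ n + 1 - a by omega)
              (show 1 ≤ n + 2 by omega) x y z, zero_add]
        have s3 : VV t N x y ((N ^ (n + 2)) z) (n + 1)
            = t ((N ^ (n + 1)) x) y ((N ^ (n + 2)) z) + t x ((N ^ (n + 1)) y) ((N ^ (n + 2)) z) +
                t x y ((N ^ (2 * n + 3)) z) := by
          simp only [VV]
          rw [← npow_apply N (n + 1) (n + 2) z, show n + 1 + (n + 2) = 2 * n + 3 from by omega]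
        rw [s1, s2, s3]
      rw [hL0, key hN (2 * n + 2) x y z, hX, hY, hZ]
      simp only [show 2 * n + 2 + 1 = 2 * n + 3 from rfl]
      simp only [FF, VV]
      simp only [Finset.sum_add_distrib]
      rw [sumE1 (fun i j => t ((N ^ i) x) ((N ^ j) y) z) n,
        sumE1 (fun i j => t ((N ^ i) x) y ((N ^ j) z)) n,
        sumE1 (fun i j => t x ((N ^ i) y) ((N ^ j) z)) n,
        sumE2 (fun i j => t ((N ^ i) x) ((N ^ j) y) z) n,
        sumE2 (fun i j => t ((N ^ i) x) y ((N ^ j) z)) n,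
        sumE2 (fun i j => t x ((N ^ i) y) ((N ^ j) z)) n]
      simp only [map_add, map_sub]
      abel
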